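/- For any graded ring S = ⊕_{j≥0} S_j with S_0 a field, any constants A, B, and any collection g_1,...,g_s of homogeneous elements of positive degree ≤ d, there exists a tower G of homogeneous elements of degrees among 1,...,d such that I(g_1,...,g_s) ⊆ I(G), G is (A,B,t)-regular, and |G| ≤ C(s+t)^D for constants C, D depending only on A, B, d. -/

import Mathlib

/-- Rank in a graded ring: `f` is a sum of `r` products of homogeneous elements of
positive degree. -/
def GRankLE {k S : Type*} [Field k] [CommRing S] [Algebra k S]
    (𝒜 : ℕ → Submodule k S) (f : S) (r : ℕ) : Prop :=
  ∃ g h : Fin r → S,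
    (∀ i, ∃ a : ℕ, 0 < a ∧ g i ∈ 𝒜 a) ∧
    (∀ i, ∃ b : ℕ, 0 < b ∧ h i ∈ 𝒜 b) ∧
    f = ∑ i, g i * h i

/-- Relative rank at most `r` on the ideal `I`, for `f` of degree `e`. -/
def GRankRelLE {k S : Type*} [Field k] [CommRing S] [Algebra k S]
    (𝒜 : ℕ → Submodule k S) (I : Ideal S) (f : S) (e r : ℕ) : Prop :=
  ∃ q ∈ I, q ∈ 𝒜 e ∧ GRankLE 𝒜 (f + q) r

/-- A tower in a graded ring, with layers `G i` of size `sz i` of common degree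
`degs i`, is `(A,B,t)`-regular: every nonzero linear combination of a layer has
relative rank `> A·(mᵢ + ⋯ + m_h + t)^B` on the ideal generated by earlier layers. -/
def GTowerRegular {k S : Type*} [Field k] [CommRing S] [Algebra k S]
    (𝒜 : ℕ → Submodule k S) {h : ℕ} (degs sz : Fin h → ℕ)
    (G : (i : Fin h) → Fin (sz i) → S) (A B t : ℕ) : Prop :=
  ∀ i : Fin h, ∀ a : Fin (sz i) → k, a ≠ 0 →
    ¬ GRankRelLE 𝒜 (Ideal.span {p | ∃ (i' : Fin h) (j : Fin (sz i')), i' < i ∧ p = G i' j})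
      (∑ j, algebraMap k S (a j) * G i j) (degs i)
      (A * ((∑ i' ∈ Finset.univ.filter (fun i' => i ≤ i'), sz i') + t) ^ B)



section Numerics

variable (A B t : ℕ)

/-- weight function -/
def wfn (x : ℕ) : ℕ := A * (x + t + 1) ^ B

/-- one step of the potential fold (processing one layer, from top degree down) -/
def potStep (st : ℕ × ℕ) (m : ℕ) : ℕ × ℕ :=
  (st.1 + (m + st.1) * wfn A B t (st.2 + (m + st.1)), st.2 + (m + st.1))

/-- potential fold over an index list (rightmost index processed first) -/
def potFold {ι : Type*} (m : ι → ℕ) (l : List ι) (st : ℕ × ℕ) : ℕ × ℕ :=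
  l.foldr (fun c s => potStep A B t s (m c)) st

@[simp] lemma potFold_nil {ι : Type*} (m : ι → ℕ) (st : ℕ × ℕ) :
    potFold A B t m [] st = st := rfl

lemma potFold_cons {ι : Type*} (m : ι → ℕ) (c : ι) (l : List ι) (st : ℕ × ℕ) :
    potFold A B t m (c :: l) st = potStep A B t (potFold A B t m l st) (m c) := rfl

lemma potFold_append {ι : Type*} (m : ι → ℕ) (l l' : List ι) (st : ℕ × ℕ) :
    potFold A B t m (l ++ l') st = potFold A B t m l (potFold A B t m l' st) := by
  simp [potFold, List.foldr_append]

lemma wfn_mono {x y : ℕ} (h : x ≤ y) : wfn A B t x ≤ wfn A B t y :=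
  Nat.mul_le_mul_left _ (Nat.pow_le_pow_left (by omega) B)

lemma potFold_ge {ι : Type*} (m : ι → ℕ) (l : List ι) (st : ℕ × ℕ) :
    st.2 + (l.map m).sum ≤ (potFold A B t m l st).2 ∧ st.1 ≤ (potFold A B t m l st).1 := by
  induction l with
  | nil => simp
  | cons c l IH =>
    rw [potFold_cons]
    rcases IH with ⟨h1, h2⟩
    constructor
    · simp only [potStep, List.map_cons, List.sum_cons]
      omega
    · simp only [potStep]
      omega

lemma potFold_congr {ι : Type*} {m m' : ι → ℕ} (l : List ι) (h : ∀ c ∈ l, m c = m' c)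
    (st : ℕ × ℕ) : potFold A B t m l st = potFold A B t m' l st := by
  induction l with
  | nil => rfl
  | cons c l IH =>
    rw [potFold_cons, potFold_cons, IH (fun c hc => h c (List.mem_cons_of_mem _ hc)),
      h c (List.mem_cons_self)]

lemma potFold_le {ι : Type*} (m m' δ : ι → ℕ) (l : List ι)
    (hmm : ∀ c ∈ l, m' c ≤ m c + δ c) :
    ∀ (K : ℕ) (st st' : ℕ × ℕ), st'.1 + (l.map δ).sum + K ≤ st.1 → st'.2 + 1 ≤ st.2 →
      (potFold A B t m' l st').1 + K ≤ (potFold A B t m l st).1 ∧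
      (potFold A B t m' l st').2 + 1 ≤ (potFold A B t m l st).2 := by
  induction l with
  | nil => intro K st st' h1 h2; simpa using ⟨by omega, h2⟩
  | cons c l IH =>
    intro K st st' h1 h2
    have hsum : st'.1 + (l.map δ).sum + (δ c + K) ≤ st.1 := by
      simp only [List.map_cons, List.sum_cons] at h1; omega
    obtain ⟨H1, H2⟩ := IH (fun x hx => hmm x (List.mem_cons_of_mem _ hx)) (δ c + K) st st' hsum h2
    rw [potFold_cons, potFold_cons]
    set F' := potFold A B t m' l st'
    set F := potFold A B t m l st
    have hmc : m' c ≤ m c + δ c := hmm c (List.mem_cons_self)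
    have hE : (m' c + F'.1) + K ≤ m c + F.1 := by omega
    have hT : F'.2 + (m' c + F'.1) + 1 ≤ F.2 + (m c + F.1) := by omega
    constructor
    · simp only [potStep]
      have hw : wfn A B t (F'.2 + (m' c + F'.1)) ≤ wfn A B t (F.2 + (m c + F.1)) :=
        wfn_mono A B t (by omega)
      have : (m' c + F'.1) * wfn A B t (F'.2 + (m' c + F'.1)) ≤
          (m c + F.1) * wfn A B t (F.2 + (m c + F.1)) :=
        Nat.mul_le_mul (by omega) hw
      omega
    · simp only [potStep]; omega

/-- polynomial growth function for the upper bound -/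
def g1 (x : ℕ) : ℕ := (A + 2) * x ^ (B + 1)

lemma g1_mono : Monotone (g1 A B) :=
  fun _ _ h => Nat.mul_le_mul_left _ (Nat.pow_le_pow_left h _)

lemma potFold_upper {ι : Type*} (m : ι → ℕ) (l : List ι) :
    ∀ (st : ℕ × ℕ) (R : ℕ),
      (potFold A B t m l st).1 + (potFold A B t m l st).2 + R + t + 1 ≤
        (g1 A B)^[l.length] (st.1 + st.2 + (l.map m).sum + R + t + 1) := by
  induction l with
  | nil => intro st R; simp
  | cons c l IH =>
    intro st R
    have IH' := IH st (m c + R)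
    rw [potFold_cons]
    set F := potFold A B t m l st
    set Y := F.1 + F.2 + (m c + R) + t + 1 with hY
    have hY1 : 1 ≤ Y := by omega
    have step : (potStep A B t F (m c)).1 + (potStep A B t F (m c)).2 + R + t + 1 ≤
        g1 A B Y := by
      simp only [potStep]
      have hE : m c + F.1 ≤ Y := by omega
      have hT : F.2 + (m c + F.1) + t + 1 ≤ Y := by omega
      have hw : wfn A B t (F.2 + (m c + F.1)) ≤ A * Y ^ B :=
        Nat.mul_le_mul_left _ (Nat.pow_le_pow_left (by omega) B)
      have h1 : (m c + F.1) * wfn A B t (F.2 + (m c + F.1)) ≤ A * Y ^ (B + 1) := by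
        calc (m c + F.1) * wfn A B t (F.2 + (m c + F.1)) ≤ Y * (A * Y ^ B) :=
              Nat.mul_le_mul hE hw
          _ = A * Y ^ (B + 1) := by ring
      have h2 : Y ≤ Y ^ (B + 1) := Nat.le_self_pow (by omega) Y
      have : F.1 + (F.2 + (m c + F.1)) + R + t + 1 ≤ 2 * Y := by omega
      calc F.1 + (m c + F.1) * wfn A B t (F.2 + (m c + F.1)) + (F.2 + (m c + F.1)) + R + t + 1
          ≤ 2 * Y + A * Y ^ (B + 1) := by omega
        _ ≤ (A + 2) * Y ^ (B + 1) := by nlinarith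
        _ = g1 A B Y := rfl
    calc (potStep A B t F (m c)).1 + (potStep A B t F (m c)).2 + R + t + 1 ≤ g1 A B Y := step
      _ ≤ g1 A B ((g1 A B)^[l.length] (st.1 + st.2 + (l.map m).sum + (m c + R) + t + 1)) :=
          g1_mono A B IH'
      _ = (g1 A B)^[(c :: l).length] (st.1 + st.2 + ((c :: l).map m).sum + R + t + 1) := by
          rw [List.length_cons, Function.iterate_succ_apply']
          congr 2
          simp only [List.map_cons, List.sum_cons]
          omega

lemma g1_iter_le (x : ℕ) (hx : 1 ≤ x) (kk : ℕ) :
    (g1 A B)^[kk] x ≤ ((A + 2) * x) ^ ((B + 2) ^ kk) := by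
  induction kk with
  | zero => simpa using Nat.le_mul_of_pos_left x (by omega)
  | succ kk IH =>
    rw [Function.iterate_succ_apply']
    set M := (A + 2) * x with hM
    have hM1 : 1 ≤ M := Nat.mul_pos (by omega) hx
    have hM2 : A + 2 ≤ M := Nat.le_mul_of_pos_right _ (by omega)
    set E := (B + 2) ^ kk with hE
    have hE1 : 1 ≤ E := Nat.one_le_pow _ _ (by omega)
    calc g1 A B ((g1 A B)^[kk] x) ≤ g1 A B (M ^ E) := g1_mono A B IH
      _ = (A + 2) * (M ^ E) ^ (B + 1) := rfl
      _ ≤ M * M ^ (E * (B + 1)) := by rw [← pow_mul]; exact Nat.mul_le_mul_right _ hM2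
      _ = M ^ (E * (B + 1) + 1) := by rw [pow_succ, mul_comm]
      _ ≤ M ^ (E * (B + 2)) := Nat.pow_le_pow_right hM1 (by nlinarith)
      _ = M ^ ((B + 2) ^ (kk + 1)) := by rw [pow_succ]
  
lemma potFold_zero {ι : Type*} (m : ι → ℕ) (l : List ι) (h : ∀ c ∈ l, m c = 0) :
    potFold A B t m l (0, 0) = (0, 0) := by
  induction l with
  | nil => rfl
  | cons c l IH =>
    rw [potFold_cons, IH (fun x hx => h x (List.mem_cons_of_mem _ hx)),
      h c (List.mem_cons_self)]
    simp [potStep]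

end Numerics

section FinRange


lemma mem_take_finRange {dd i : ℕ} {c : Fin dd} (h : c ∈ (List.finRange dd).take i) :
    (c : ℕ) < i := by
  obtain ⟨j, hj, hc⟩ := List.mem_iff_getElem.mp h
  have hj' : j < i := by
    simp [List.length_take, List.length_finRange] at hj
    omega
  rw [List.getElem_take, List.getElem_finRange] at hc
  have : (c : ℕ) = j := by rw [← hc]; rfl
  omega

lemma mem_drop_finRange {dd i : ℕ} {c : Fin dd} (h : c ∈ (List.finRange dd).drop i) :
    i ≤ (c : ℕ) := by
  obtain ⟨j, hj, hc⟩ := List.mem_iff_getElem.mp h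
  rw [List.getElem_drop, List.getElem_finRange] at hc
  have : (c : ℕ) = i + j := by rw [← hc]; rfl
  omega

lemma drop_finRange_eq {dd : ℕ} (i : Fin dd) :
    (List.finRange dd).drop i = i :: (List.finRange dd).drop (i + 1) := by
  rw [List.drop_eq_getElem_cons (by simpa [List.length_finRange] using i.isLt)]
  congr 1
  rw [List.getElem_finRange]
  apply Fin.ext
  rfl

lemma filter_sum_eq_drop {dd : ℕ} (f : Fin dd → ℕ) (i : Fin dd) :
    ∑ i' ∈ Finset.univ.filter (fun i' => i ≤ i'), f i' =
      (((List.finRange dd).drop i).map f).sum := by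
  rw [Finset.sum_filter, Fin.sum_univ_def]
  conv_lhs => rw [← List.take_append_drop (i : ℕ) (List.finRange dd)]
  rw [List.map_append, List.sum_append]
  have h1 : (((List.finRange dd).take i).map (fun c => if i ≤ c then f c else 0)).sum = 0 := by
    apply List.sum_eq_zero
    intro x hx
    obtain ⟨c, hc, rfl⟩ := List.mem_map.mp hx
    rw [if_neg]
    intro hle
    have h1 := mem_take_finRange hc
    have h2 := Fin.le_def.mp hle
    omega
  have h2 : (((List.finRange dd).drop i).map (fun c => if i ≤ c then f c else 0)) =
      ((List.finRange dd).drop i).map f := by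
    apply List.map_congr_left
    intro c hc
    rw [if_pos (by exact Fin.le_def.mpr (mem_drop_finRange hc))]
  rw [h1, h2, zero_add]

/-- the key decrease lemma for one replacement step -/
lemma pot_decrease (A B t : ℕ) {dd : ℕ} (i : Fin dd) (msz msz' δ : Fin dd → ℕ)
    (hhigh : ∀ c, i < c → msz' c = msz c)
    (hi : msz' i + 1 = msz i)
    (hlow : ∀ c, c < i → msz' c ≤ msz c + δ c)
    (hδ : ((((List.finRange dd).take i).map δ).sum) ≤
      A * ((((List.finRange dd).drop i).map msz).sum + t) ^ B) :
    (potFold A B t msz' (List.finRange dd) (0, 0)).2 + 1 ≤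
      (potFold A B t msz (List.finRange dd) (0, 0)).2 := by
  have hsplit : List.finRange dd =
      (List.finRange dd).take i ++ i :: (List.finRange dd).drop (i + 1) := by
    rw [← drop_finRange_eq, List.take_append_drop]
  rw [hsplit]
  rw [potFold_append, potFold_append, potFold_cons, potFold_cons]
  set st₀ := potFold A B t msz ((List.finRange dd).drop (i + 1)) (0, 0) with hst₀
  have hcongr : potFold A B t msz' ((List.finRange dd).drop (i + 1)) (0, 0) = st₀ := by
    apply potFold_congr
    intro c hc
    exact hhigh c (Fin.lt_def.mpr (by have := mem_drop_finRange hc; omega))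
  rw [hcongr]
  -- the step at layer i
  set E' := msz' i + st₀.1 with hE'
  have hE : msz i + st₀.1 = E' + 1 := by omega
  set T' := st₀.2 + E' with hT'
  have dropsum : (((List.finRange dd).drop i).map msz).sum ≤ T' + 1 := by
    rw [drop_finRange_eq, List.map_cons, List.sum_cons]
    have := (potFold_ge A B t msz ((List.finRange dd).drop (i + 1)) (0, 0)).1
    rw [← hst₀] at this
    simp only [Prod.fst, Prod.snd, zero_add] at this
    omega
  have hsavings : ((((List.finRange dd).take i).map δ).sum) ≤ wfn A B t T' := by
    calc ((((List.finRange dd).take i).map δ).sum) ≤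
        A * ((((List.finRange dd).drop i).map msz).sum + t) ^ B := hδ
      _ ≤ A * (T' + t + 1) ^ B := Nat.mul_le_mul_left _ (Nat.pow_le_pow_left (by omega) B)
      _ = wfn A B t T' := rfl
  have key := potFold_le A B t msz msz' δ ((List.finRange dd).take i)
    (fun c hc => hlow c (Fin.lt_def.mpr (mem_take_finRange hc))) 0
    (potStep A B t st₀ (msz i)) (potStep A B t st₀ (msz' i)) ?_ ?_
  · exact key.2
  · -- Σ part
    simp only [potStep]
    rw [← hE', hE]
    have h1 : E' * wfn A B t (st₀.2 + E') ≤ E' * wfn A B t (st₀.2 + (E' + 1)) :=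
      Nat.mul_le_mul_left _ (wfn_mono A B t (by omega))
    have h2 : wfn A B t T' ≤ wfn A B t (st₀.2 + (E' + 1)) := wfn_mono A B t (by omega)
    have h3 : (E' + 1) * wfn A B t (st₀.2 + (E' + 1)) =
        E' * wfn A B t (st₀.2 + (E' + 1)) + wfn A B t (st₀.2 + (E' + 1)) := by ring
    omega
  · simp only [potStep]
    rw [← hE', hE]
    omega

end FinRange

universe u' v'


section Alg
variable {k : Type u'} [Field k] {S : Type v'} [CommRing S] [Algebra k S]

lemma decompose_proj (𝒜 : ℕ → Submodule k S) [GradedAlgebra 𝒜] {e r : ℕ} {F : S}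
    (hF : F ∈ 𝒜 e) (gg hh : Fin r → S) (aa bb : Fin r → ℕ)
    (hga : ∀ m, gg m ∈ 𝒜 (aa m)) (hhb : ∀ m, hh m ∈ 𝒜 (bb m))
    (hsum : F = ∑ m, gg m * hh m) :
    F = ∑ m ∈ Finset.univ.filter (fun m => aa m + bb m = e), gg m * hh m := by
  classical
  let p : S →+ S :=
  { toFun := fun x => ((DirectSum.decompose 𝒜 x) e : S)
    map_zero' := by simp
    map_add' := by intro x y; simp }
  have h1 : p F = F := DirectSum.decompose_of_mem_same 𝒜 hF
  have h2 : ∀ m : Fin r, p (gg m * hh m) = if aa m + bb m = e then gg m * hh m else 0 := by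
    intro m
    have hmem : gg m * hh m ∈ 𝒜 (aa m + bb m) := SetLike.mul_mem_graded (hga m) (hhb m)
    by_cases hm : aa m + bb m = e
    · rw [if_pos hm]
      subst hm
      exact DirectSum.decompose_of_mem_same 𝒜 hmem
    · rw [if_neg hm]
      exact DirectSum.decompose_of_mem_ne 𝒜 hmem hm
  calc F = p F := h1.symm
    _ = p (∑ m, gg m * hh m) := by rw [← hsum]
    _ = ∑ m, p (gg m * hh m) := map_sum p _ _
    _ = ∑ m, if aa m + bb m = e then gg m * hh m else 0 := Finset.sum_congr rfl (fun m _ => h2 m)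
    _ = _ := (Finset.sum_filter _ _).symm

lemma process (𝒜 : ℕ → Submodule k S) [GradedAlgebra 𝒜] (A B t dd : ℕ) :
    ∀ (n : ℕ) (L : Fin dd → List S),
      (potFold ((dd + 1) * A) B t (fun c => (L c).length) (List.finRange dd) (0, 0)).2 ≤ n →
      (∀ i : Fin dd, ∀ x ∈ L i, x ∈ 𝒜 ((i : ℕ) + 1)) →
      ∃ L' : Fin dd → List S,
        (∀ i : Fin dd, ∀ x ∈ L' i, x ∈ 𝒜 ((i : ℕ) + 1)) ∧
        Ideal.span {p | ∃ i, p ∈ L i} ≤ Ideal.span {p | ∃ i, p ∈ L' i} ∧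
        GTowerRegular 𝒜 (fun i : Fin dd => (i : ℕ) + 1) (fun i => (L' i).length)
          (fun i j => (L' i).get j) A B t ∧
        (potFold ((dd + 1) * A) B t (fun c => (L' c).length) (List.finRange dd) (0, 0)).2 ≤ n := by
  intro n
  induction n using Nat.strong_induction_on with
  | _ n IH =>
  intro L hpot hmem
  by_cases hreg : GTowerRegular 𝒜 (fun i : Fin dd => (i : ℕ) + 1) (fun i => (L i).length)
      (fun i j => (L i).get j) A B t
  · exact ⟨L, hmem, le_rfl, hreg, hpot⟩
  unfold GTowerRegular at hreg
  push_neg at hreg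
  obtain ⟨i, a, ha0, hRel⟩ := hreg
  set R := A * ((∑ i' ∈ Finset.univ.filter (fun i' => i ≤ i'), (L i').length) + t) ^ B with hRdef
  unfold GRankRelLE GRankLE at hRel
  obtain ⟨q, hqI, hqA, gg, hh, hga, hhb, hEq⟩ := hRel
  choose aa haapos hgaA using hga
  choose bb hbbpos hhbA using hhb
  set f := ∑ j, algebraMap k S (a j) * (L i).get j with hfdef
  have hfA : f ∈ 𝒜 ((i : ℕ) + 1) := by
    apply Submodule.sum_mem
    intro j _
    rw [← Algebra.smul_def]
    exact Submodule.smul_mem _ _ (hmem i _ (List.get_mem _ _))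
  have hFA : f + q ∈ 𝒜 ((i : ℕ) + 1) := Submodule.add_mem _ hfA hqA
  have hproj : f + q = ∑ m ∈ Finset.univ.filter (fun m => aa m + bb m = (i : ℕ) + 1),
      gg m * hh m := decompose_proj 𝒜 hFA gg hh aa bb hgaA hhbA hEq
  obtain ⟨j₀, hj₀⟩ : ∃ j, a j ≠ 0 := by
    by_contra h
    push_neg at h
    exact ha0 (funext h)
  classical
  set new : Fin dd → List S := fun c =>
    ((List.finRange R).filter
      (fun m => decide (aa m = (c : ℕ) + 1 ∧ aa m + bb m = (i : ℕ) + 1))).map gg with hnew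
  set L' : Fin dd → List S := fun c =>
    if c = i then (L i).eraseIdx (j₀ : ℕ) else if c < i then L c ++ new c else L c with hL'
  have hL'i : L' i = (L i).eraseIdx (j₀ : ℕ) := by simp [hL']
  have hL'lt : ∀ c, c < i → L' c = L c ++ new c := by
    intro c hc
    simp [hL', Fin.ne_of_lt hc, hc]
  have hL'gt : ∀ c, i < c → L' c = L c := by
    intro c hc
    simp [hL', Fin.ne_of_gt hc, not_lt_of_gt hc]
  -- homogeneity
  have hmem' : ∀ c : Fin dd, ∀ x ∈ L' c, x ∈ 𝒜 ((c : ℕ) + 1) := by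
    intro c x hx
    rcases lt_trichotomy c i with h | h | h
    · rw [hL'lt c h] at hx
      rcases List.mem_append.mp hx with h' | h'
      · exact hmem c x h'
      · obtain ⟨m, hm, rfl⟩ := List.mem_map.mp h'
        have hc := of_decide_eq_true (List.mem_filter.mp hm).2
        exact hc.1 ▸ hgaA m
    · subst h
      rw [hL'i] at hx
      exact hmem c x ((List.eraseIdx_sublist _ _).subset hx)
    · rw [hL'gt c h] at hx
      exact hmem c x hx
  have hsub : ∀ c, c ≠ i → ∀ x ∈ L c, x ∈ L' c := by
    intro c hc x hx
    rcases lt_or_gt_of_ne hc with h | h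
    · rw [hL'lt c h]; exact List.mem_append_left _ hx
    · rw [hL'gt c h]; exact hx
  set J := Ideal.span {p | ∃ c, p ∈ L' c} with hJ
  have hq' : q ∈ J := by
    have hle : Ideal.span {p | ∃ (i' : Fin dd) (j : Fin (L i').length),
        i' < i ∧ p = (L i').get j} ≤ J := by
      rw [Ideal.span_le]
      rintro p ⟨i', j, hi', rfl⟩
      exact Ideal.subset_span ⟨i', hsub i' (Fin.ne_of_lt hi') _ (List.get_mem _ _)⟩
    exact hle hqI
  have hfJ : f ∈ J := by
    have hf : f = (∑ m ∈ Finset.univ.filter (fun m => aa m + bb m = (i : ℕ) + 1),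
        gg m * hh m) - q := by rw [← hproj]; ring
    rw [hf]
    refine Submodule.sub_mem _ (Submodule.sum_mem _ ?_) hq'
    intro m hm
    have hmf : aa m + bb m = (i : ℕ) + 1 := (Finset.mem_filter.mp hm).2
    have haam := haapos m
    have hbbm := hbbpos m
    have h1 : aa m - 1 < dd := by have := i.isLt; omega
    have hcmi : (⟨aa m - 1, h1⟩ : Fin dd) < i := by
      rw [Fin.lt_def]
      simp only []
      omega
    have hgm : gg m ∈ L' ⟨aa m - 1, h1⟩ := by
      rw [hL'lt _ hcmi]
      refine List.mem_append_right _ ?_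
      refine List.mem_map.mpr ⟨m, List.mem_filter.mpr ⟨List.mem_finRange m,
        decide_eq_true ⟨?_, hmf⟩⟩, rfl⟩
      simp only []
      omega
    exact Ideal.mul_mem_right _ _ (Ideal.subset_span ⟨_, hgm⟩)
  have hLi : ∀ x ∈ L i, x ∈ J := by
    intro x hx
    obtain ⟨jn, hjlt, hjx⟩ := List.mem_iff_getElem.mp hx
    by_cases hjj : jn = (j₀ : ℕ)
    · have hx0 : (L i).get j₀ = x := by
        rw [List.get_eq_getElem]
        subst hjj
        exact hjx
      rw [← hx0]
      have hterm : algebraMap k S (a j₀) * (L i).get j₀ ∈ J := by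
        have hsplit : algebraMap k S (a j₀) * (L i).get j₀ =
            f - ∑ jj ∈ Finset.univ.erase j₀, algebraMap k S (a jj) * (L i).get jj := by
          rw [eq_sub_iff_add_eq, add_comm]
          exact Finset.sum_erase_add _ _ (Finset.mem_univ j₀)
        rw [hsplit]
        refine Submodule.sub_mem _ hfJ (Submodule.sum_mem _ ?_)
        intro jj hjj'
        have hne := Finset.ne_of_mem_erase hjj'
        have hmm : (L i).get jj ∈ L' i := by
          rw [hL'i]
          exact List.mem_eraseIdx_iff_getElem.mpr
            ⟨jj, jj.isLt, Fin.val_ne_of_ne hne, List.get_eq_getElem.symm⟩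
        exact Ideal.mul_mem_left _ _ (Ideal.subset_span ⟨i, hmm⟩)
      have hsolve : (L i).get j₀ =
          algebraMap k S ((a j₀)⁻¹) * (algebraMap k S (a j₀) * (L i).get j₀) := by
        rw [← mul_assoc, ← map_mul, inv_mul_cancel₀ hj₀, map_one, one_mul]
      rw [hsolve]
      exact Ideal.mul_mem_left _ _ hterm
    · exact Ideal.subset_span ⟨i, by
        rw [hL'i]
        exact List.mem_eraseIdx_iff_getElem.mpr ⟨jn, hjlt, hjj, hjx⟩⟩
  have hspan : Ideal.span {p | ∃ c, p ∈ L c} ≤ J := by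
    rw [Ideal.span_le]
    rintro p ⟨c, hp⟩
    by_cases hci : c = i
    · subst hci; exact hLi p hp
    · exact Ideal.subset_span ⟨c, hsub c hci p hp⟩
  -- potential decrease
  have hdec : (potFold ((dd + 1) * A) B t (fun c => (L' c).length)
      (List.finRange dd) (0, 0)).2 + 1 ≤
      (potFold ((dd + 1) * A) B t (fun c => (L c).length) (List.finRange dd) (0, 0)).2 := by
    apply pot_decrease ((dd + 1) * A) B t i _ _ (fun c => (new c).length)
    · intro c hc; rw [hL'gt c hc]
    · show (L' i).length + 1 = (L i).length
      have hlen : (j₀ : ℕ) < (L i).length := j₀.isLt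
      rw [hL'i, List.length_eraseIdx, if_pos hlen]
      omega
    · intro c hc
      rw [hL'lt c hc, List.length_append]
    · have hr : ∀ c : Fin dd, (new c).length ≤ R := by
        intro c
        rw [hnew]
        simp only [List.length_map]
        calc (List.filter _ (List.finRange R)).length ≤ (List.finRange R).length :=
              List.length_filter_le _ _
          _ = R := List.length_finRange
      calc ((((List.finRange dd).take i).map (fun c => (new c).length)).sum) ≤
            (((List.finRange dd).take i).map (fun c => (new c).length)).length • R := by
            apply List.sum_le_card_nsmul
            intro x hx
            obtain ⟨c, _, rfl⟩ := List.mem_map.mp hx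
            exact hr c
        _ = ((List.finRange dd).take i).length * R := by rw [List.length_map, smul_eq_mul]
        _ ≤ dd * R := by
            apply Nat.mul_le_mul_right
            rw [List.length_take, List.length_finRange]
            omega
        _ = dd * (A * ((((List.finRange dd).drop i).map (fun c => (L c).length)).sum + t) ^ B) := by
            rw [hRdef, filter_sum_eq_drop]
        _ ≤ ((dd + 1) * A) * ((((List.finRange dd).drop i).map
              (fun c => (L c).length)).sum + t) ^ B := by
            rw [← mul_assoc]
            exact Nat.mul_le_mul_right _ (Nat.mul_le_mul_right _ (by omega))
  have hlt : (potFold ((dd + 1) * A) B t (fun c => (L' c).length)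
      (List.finRange dd) (0, 0)).2 < n := by omega
  obtain ⟨L'', h1, h2, h3, h4⟩ := IH _ hlt L' le_rfl hmem'
  exact ⟨L'', h1, le_trans hspan h2, h3, le_trans h4 (by omega)⟩

end Alg

/-- relative regularization: for any graded ring `S` with `S₀` a field,
constants `A, B` and homogeneous `g₁,…,g_s` of positive degrees `≤ d`, there is a tower
`G` with degrees among `1,…,d` such that `I(g₁,…,g_s) ⊆ I(G)`, `G` is `(A,B,t)`-regular
and `|G| ≤ C·(s+t)^D` for constants `C, D` depending only on `A, B, d`. -/
theorem relative_regularization.{u, v} (A B d : ℕ) :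
    ∃ C D : ℕ,
      ∀ (k : Type u) [Field k] (S : Type v) [CommRing S] [Algebra k S]
        (𝒜 : ℕ → Submodule k S), ∀ [GradedAlgebra 𝒜],
        𝒜 0 = (1 : Submodule k S) →
        ∀ (s t : ℕ) (g : Fin s → S),
          (∀ j, ∃ e : ℕ, 0 < e ∧ e ≤ d ∧ g j ∈ 𝒜 e) →
          ∃ (h : ℕ) (degs sz : Fin h → ℕ) (G : (i : Fin h) → Fin (sz i) → S),
            StrictMono degs ∧
            (∀ i, 0 < degs i ∧ degs i ≤ d) ∧
            (∀ i j, G i j ∈ 𝒜 (degs i)) ∧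
            Ideal.span (Set.range g) ≤
              Ideal.span {p | ∃ (i : Fin h) (j : Fin (sz i)), p = G i j} ∧
            GTowerRegular 𝒜 degs sz G A B t ∧
            (∑ i, sz i) ≤ C * (s + t) ^ D := by
  classical
  refine ⟨(((d + 1) * A + 2) * (d + 2)) ^ ((B + 2) ^ d), (B + 2) ^ d, ?_⟩
  intro k _ S _ _ 𝒜 _ h𝒜0 s t g hg
  rcases Nat.eq_zero_or_pos s with hs | hs
  · subst hs
    refine ⟨0, Fin.elim0, Fin.elim0, fun i => i.elim0, ?_, ?_, ?_, ?_, ?_, ?_⟩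
    · intro x; exact x.elim0
    · intro i; exact i.elim0
    · intro i; exact i.elim0
    · rw [Set.range_eq_empty g, Ideal.span_empty]
      exact bot_le
    · intro i; exact i.elim0
    · simp
  · -- main case
    set ev : Fin s → ℕ := fun j => (hg j).choose with hev
    have hevs : ∀ j, 0 < ev j ∧ ev j ≤ d ∧ g j ∈ 𝒜 (ev j) := fun j => (hg j).choose_spec
    set L₀ : Fin d → List S := fun c =>
      ((List.finRange s).filter (fun j => decide (ev j = (c : ℕ) + 1))).map g with hL₀
    have hmem₀ : ∀ c : Fin d, ∀ x ∈ L₀ c, x ∈ 𝒜 ((c : ℕ) + 1) := by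
      intro c x hx
      obtain ⟨j, hj, rfl⟩ := List.mem_map.mp hx
      have hc := of_decide_eq_true (List.mem_filter.mp hj).2
      exact hc ▸ (hevs j).2.2
    obtain ⟨L', hmem', hspan', hreg', hpot'⟩ := process 𝒜 A B t d
      ((potFold ((d + 1) * A) B t (fun c => (L₀ c).length) (List.finRange d) (0, 0)).2)
      L₀ le_rfl hmem₀
    refine ⟨d, fun i => (i : ℕ) + 1, fun i => (L' i).length, fun i j => (L' i).get j,
      ?_, ?_, ?_, ?_, hreg', ?_⟩
    · intro x y hxy
      have := Fin.lt_def.mp hxy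
      simpa using this
    · intro i
      exact ⟨Nat.succ_pos _, i.isLt⟩
    · intro i j
      exact hmem' i _ (List.get_mem _ _)
    · -- ideal inclusion
      have e1 : Ideal.span (Set.range g) ≤ Ideal.span {p | ∃ c, p ∈ L₀ c} := by
        rw [Ideal.span_le]
        rintro p ⟨j, rfl⟩
        have h1 : ev j - 1 < d := by have := (hevs j).1; have := (hevs j).2.1; omega
        refine Ideal.subset_span ⟨⟨ev j - 1, h1⟩, ?_⟩
        refine List.mem_map.mpr ⟨j, List.mem_filter.mpr ⟨List.mem_finRange j,
          decide_eq_true ?_⟩, rfl⟩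
        have := (hevs j).1
        simp only []
        omega
      have e2 : {p | ∃ c, p ∈ L' c} =
          {p | ∃ (i : Fin d) (j : Fin ((L' i).length)), p = (L' i).get j} := by
        ext x
        constructor
        · rintro ⟨c, hc⟩
          obtain ⟨j, hj⟩ := List.mem_iff_get.mp hc
          exact ⟨c, j, hj.symm⟩
        · rintro ⟨c, j, rfl⟩
          exact ⟨c, List.get_mem _ _⟩
      calc Ideal.span (Set.range g) ≤ Ideal.span {p | ∃ c, p ∈ L₀ c} := e1
        _ ≤ Ideal.span {p | ∃ c, p ∈ L' c} := hspan'
        _ = _ := by rw [e2]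
    · -- counting
      set A' := (d + 1) * A with hA'
      have c1 : ∑ i, (L' i).length ≤
          (potFold A' B t (fun c => (L' c).length) (List.finRange d) (0, 0)).2 := by
        have := (potFold_ge A' B t (fun c => (L' c).length) (List.finRange d) (0, 0)).1
        rw [Fin.sum_univ_def]
        simpa using this
      have hup := potFold_upper A' B t (fun c => (L₀ c).length) (List.finRange d) (0, 0) 0
      simp only [List.length_finRange] at hup
      have harg : ((0, 0) : ℕ × ℕ).1 + ((0, 0) : ℕ × ℕ).2 +
          ((List.finRange d).map (fun c => (L₀ c).length)).sum + 0 + t + 1 =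
          ((List.finRange d).map (fun c => (L₀ c).length)).sum + t + 1 := by simp
      rw [harg] at hup
      have c3 : ((List.finRange d).map (fun c => (L₀ c).length)).sum ≤ d * s := by
        calc ((List.finRange d).map (fun c => (L₀ c).length)).sum ≤
            ((List.finRange d).map (fun c => (L₀ c).length)).length • s := by
              apply List.sum_le_card_nsmul
              intro x hx
              obtain ⟨c, _, rfl⟩ := List.mem_map.mp hx
              calc (L₀ c).length ≤ (List.finRange s).length := by
                    rw [hL₀]
                    simp only [List.length_map]
                    exact List.length_filter_le _ _
                _ = s := List.length_finRange
          _ = d * s := by rw [List.length_map, List.length_finRange, smul_eq_mul]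
      have c4 : (g1 A' B)^[d] (((List.finRange d).map (fun c => (L₀ c).length)).sum + t + 1) ≤
          (g1 A' B)^[d] (d * s + t + 1) := (g1_mono A' B).iterate d (by omega)
      have c5 : (g1 A' B)^[d] (d * s + t + 1) ≤ ((A' + 2) * (d * s + t + 1)) ^ ((B + 2) ^ d) :=
        g1_iter_le A' B _ (by omega) d
      have c6 : (A' + 2) * (d * s + t + 1) ≤ (A' + 2) * ((d + 2) * (s + t)) := by
        apply Nat.mul_le_mul_left
        have h1 : d * s ≤ d * (s + t) := Nat.mul_le_mul_left _ (by omega)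
        nlinarith
      have c7 : ((A' + 2) * (d * s + t + 1)) ^ ((B + 2) ^ d) ≤
          ((A' + 2) * ((d + 2) * (s + t))) ^ ((B + 2) ^ d) :=
        Nat.pow_le_pow_left c6 _
      have c8 : ((A' + 2) * ((d + 2) * (s + t))) ^ ((B + 2) ^ d) =
          (((d + 1) * A + 2) * (d + 2)) ^ ((B + 2) ^ d) * (s + t) ^ ((B + 2) ^ d) := by
        rw [← mul_assoc, mul_pow, hA']
      calc ∑ i, (L' i).length ≤ _ := c1
        _ ≤ _ := hpot'
        _ ≤ (g1 A' B)^[d] (((List.finRange d).map (fun c => (L₀ c).length)).sum + t + 1) := by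
            omega
        _ ≤ _ := c4
        _ ≤ _ := c5
        _ ≤ _ := c7
        _ = _ := c8
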